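/- For any affine function v on a nondegenerate tetrahedron K with vertices S_1,...,S_4, the lumped norm is bounded by √5 times the L² norm: (vol(K)/4)·Σ_{i=1}^4 v(S_i)² ≤ 5 ∫_K v² dx. -/

import Mathlib

open MeasureTheory

lemma int_poly (A B C D E t : ℝ) :
    (∫ y in (0:ℝ)..t, (A + B*y + C*y^2 + D*y^3 + E*y^4)) =
      A*t + B*t^2/2 + C*t^3/3 + D*t^4/4 + E*t^5/5 := by
  have I : ∀ (c : ℝ) (n : ℕ), IntervalIntegrable (fun y : ℝ => c * y^n) volume 0 t :=
    fun c n => (continuous_const.mul (continuous_pow n)).intervalIntegrable _ _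
  have h : ∀ (c : ℝ) (n : ℕ), (∫ y in (0:ℝ)..t, c * y^n) = c * (t^(n+1)) / (n+1) := by
    intro c n
    rw [intervalIntegral.integral_const_mul, integral_pow]
    rw [zero_pow (Nat.succ_ne_zero n)]
    ring
  have e : (fun y : ℝ => A + B*y + C*y^2 + D*y^3 + E*y^4)
      = fun y : ℝ => A*y^0 + B*y^1 + C*y^2 + D*y^3 + E*y^4 := funext fun y => by ring
  rw [e,
    intervalIntegral.integral_add ((((I A 0).add (I B 1)).add (I C 2)).add (I D 3)) (I E 4),
    intervalIntegral.integral_add (((I A 0).add (I B 1)).add (I C 2)) (I D 3),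
    intervalIntegral.integral_add ((I A 0).add (I B 1)) (I C 2),
    intervalIntegral.integral_add (I A 0) (I B 1), h, h, h, h, h]
  norm_num

lemma sliceIcc (f : ℝ → ℝ) (u : ℝ) (hu : 0 ≤ u) :
    ∫ z in Set.Icc (0:ℝ) u, f z = ∫ z in (0:ℝ)..u, f z := by
  rw [intervalIntegral.integral_of_le hu, integral_Icc_eq_integral_Ioc]

lemma T2_integral (f : ℝ → ℝ → ℝ) (hf : Continuous fun q : ℝ × ℝ => f q.1 q.2)
    (u : ℝ) (hu : 0 ≤ u) :
    ∫ q in {q : ℝ × ℝ | 0 ≤ q.1 ∧ 0 ≤ q.2 ∧ q.1 + q.2 ≤ u}, f q.1 q.2 =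
      ∫ y in (0:ℝ)..u, ∫ z in (0:ℝ)..(u - y), f y z := by
  set S : Set (ℝ × ℝ) := {q : ℝ × ℝ | 0 ≤ q.1 ∧ 0 ≤ q.2 ∧ q.1 + q.2 ≤ u} with hSdef
  have hSm : MeasurableSet S := by
    have : S = {q : ℝ × ℝ | 0 ≤ q.1} ∩ ({q : ℝ × ℝ | 0 ≤ q.2} ∩ {q : ℝ × ℝ | q.1 + q.2 ≤ u}) := by
      ext q; simp [hSdef, and_assoc]
    rw [this]
    exact (measurableSet_le measurable_const measurable_fst).inter
      ((measurableSet_le measurable_const measurable_snd).inter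
        (measurableSet_le (measurable_fst.add measurable_snd) measurable_const))
  have hsub : S ⊆ Set.Icc ((0:ℝ), (0:ℝ)) (u, u) := by
    rintro q ⟨h1, h2, h3⟩
    rw [Set.mem_Icc]
    exact ⟨⟨h1, h2⟩, ⟨by linarith, by linarith⟩⟩
  have hIntOn : IntegrableOn (fun q : ℝ × ℝ => f q.1 q.2) S :=
    (hf.continuousOn.integrableOn_compact isCompact_Icc).mono_set hsub
  have hInt2 : Integrable (S.indicator fun q : ℝ × ℝ => f q.1 q.2) (volume.prod volume) := by
    rw [← Measure.volume_eq_prod]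
    exact (integrable_indicator_iff hSm).2 hIntOn
  rw [← integral_indicator hSm, Measure.volume_eq_prod, integral_prod _ hInt2]
  have key : (fun y => ∫ z, S.indicator (fun q : ℝ × ℝ => f q.1 q.2) (y, z)) =
      Set.indicator (Set.Icc 0 u) (fun y => ∫ z in (0:ℝ)..(u - y), f y z) := by
    funext y
    by_cases hy : y ∈ Set.Icc (0:ℝ) u
    · rw [Set.mem_Icc] at hy
      have h1 : ∀ z, S.indicator (fun q : ℝ × ℝ => f q.1 q.2) (y, z)
          = (Set.Icc 0 (u - y)).indicator (fun z => f y z) z := by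
        intro z
        by_cases hz : z ∈ Set.Icc (0:ℝ) (u - y)
        · rw [Set.mem_Icc] at hz
          rw [Set.indicator_of_mem (by exact ⟨hy.1, hz.1, by linarith⟩ : (y, z) ∈ S),
            Set.indicator_of_mem (Set.mem_Icc.2 hz)]
        · rw [Set.mem_Icc] at hz
          rw [Set.indicator_of_notMem (fun h => hz ⟨h.2.1, by
              have h3 : y + z ≤ u := h.2.2
              linarith⟩),
            Set.indicator_of_notMem (fun h => hz (Set.mem_Icc.1 h))]
      simp only [h1]
      rw [integral_indicator measurableSet_Icc, sliceIcc _ _ (by linarith [hy.2] : (0:ℝ) ≤ u - y),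
        Set.indicator_of_mem (Set.mem_Icc.2 hy)]
    · have h1 : ∀ z, S.indicator (fun q : ℝ × ℝ => f q.1 q.2) (y, z) = 0 := by
        intro z
        refine Set.indicator_of_notMem (fun h => hy ?_) _
        exact Set.mem_Icc.2 ⟨h.1, by have h3 : y + z ≤ u := h.2.2; have h2 : (0:ℝ) ≤ z := h.2.1; linarith⟩
      simp only [h1, integral_zero]
      rw [Set.indicator_of_notMem hy]
  rw [key, integral_indicator measurableSet_Icc, sliceIcc _ _ hu]
def T3set : Set (ℝ × ℝ × ℝ) := {p | 0 ≤ p.1 ∧ 0 ≤ p.2.1 ∧ 0 ≤ p.2.2 ∧ p.1 + p.2.1 + p.2.2 ≤ 1}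

lemma T3m : MeasurableSet T3set := by
  have : T3set = {p : ℝ × ℝ × ℝ | 0 ≤ p.1} ∩ ({p : ℝ × ℝ × ℝ | 0 ≤ p.2.1} ∩
      ({p : ℝ × ℝ × ℝ | 0 ≤ p.2.2} ∩ {p : ℝ × ℝ × ℝ | p.1 + p.2.1 + p.2.2 ≤ 1})) := by
    ext p; simp [T3set, and_assoc]
  rw [this]
  have m1 : Measurable fun p : ℝ × ℝ × ℝ => p.1 := measurable_fst
  have m2 : Measurable fun p : ℝ × ℝ × ℝ => p.2.1 := measurable_fst.comp measurable_snd
  have m3 : Measurable fun p : ℝ × ℝ × ℝ => p.2.2 := measurable_snd.comp measurable_snd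
  exact (measurableSet_le measurable_const m1).inter
    ((measurableSet_le measurable_const m2).inter
      ((measurableSet_le measurable_const m3).inter
        (measurableSet_le ((m1.add m2).add m3) measurable_const)))

lemma T3_integral (f : ℝ → ℝ → ℝ → ℝ) (hf : Continuous fun p : ℝ × ℝ × ℝ => f p.1 p.2.1 p.2.2) :
    ∫ p in T3set, f p.1 p.2.1 p.2.2 =
      ∫ x in (0:ℝ)..1, ∫ y in (0:ℝ)..(1 - x), ∫ z in (0:ℝ)..(1 - x - y), f x y z := by
  have hsub : T3set ⊆ Set.Icc ((0:ℝ), ((0:ℝ), (0:ℝ))) (1, (1, 1)) := by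
    rintro p ⟨h1, h2, h3, h4⟩
    rw [Set.mem_Icc]
    exact ⟨⟨h1, h2, h3⟩, ⟨show p.1 ≤ 1 by linarith, show p.2.1 ≤ 1 by linarith, show p.2.2 ≤ 1 by linarith⟩⟩
  have hIntOn : IntegrableOn (fun p : ℝ × ℝ × ℝ => f p.1 p.2.1 p.2.2) T3set :=
    (hf.continuousOn.integrableOn_compact isCompact_Icc).mono_set hsub
  have hInt2 : Integrable (T3set.indicator fun p : ℝ × ℝ × ℝ => f p.1 p.2.1 p.2.2)
      (volume.prod volume) := by
    rw [← Measure.volume_eq_prod]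
    exact (integrable_indicator_iff T3m).2 hIntOn
  rw [← integral_indicator T3m, Measure.volume_eq_prod, integral_prod _ hInt2]
  have key : (fun x => ∫ q : ℝ × ℝ, T3set.indicator (fun p : ℝ × ℝ × ℝ => f p.1 p.2.1 p.2.2) (x, q)) =
      Set.indicator (Set.Icc 0 1) (fun x => ∫ y in (0:ℝ)..(1 - x), ∫ z in (0:ℝ)..(1 - x - y), f x y z) := by
    funext x
    by_cases hx : x ∈ Set.Icc (0:ℝ) 1
    · rw [Set.mem_Icc] at hx
      have h1 : ∀ q : ℝ × ℝ, T3set.indicator (fun p : ℝ × ℝ × ℝ => f p.1 p.2.1 p.2.2) (x, q)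
          = ({q : ℝ × ℝ | 0 ≤ q.1 ∧ 0 ≤ q.2 ∧ q.1 + q.2 ≤ 1 - x}).indicator
              (fun q : ℝ × ℝ => f x q.1 q.2) q := by
        intro q
        by_cases hq : q ∈ {q : ℝ × ℝ | 0 ≤ q.1 ∧ 0 ≤ q.2 ∧ q.1 + q.2 ≤ 1 - x}
        · have hq' := hq
          obtain ⟨hq1, hq2, hq3⟩ := hq'
          rw [Set.indicator_of_mem (by exact ⟨hx.1, hq1, hq2, by linarith⟩ : (x, q) ∈ T3set),
            Set.indicator_of_mem hq]
        · rw [Set.indicator_of_notMem hq, Set.indicator_of_notMem (fun h => hq ?_)]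
          obtain ⟨h1, h2, h3, h4⟩ := h
          exact ⟨h2, h3, by linarith⟩
      simp only [h1]
      rw [show (∫ q : ℝ × ℝ, ({q : ℝ × ℝ | 0 ≤ q.1 ∧ 0 ≤ q.2 ∧ q.1 + q.2 ≤ 1 - x}).indicator
            (fun q : ℝ × ℝ => f x q.1 q.2) q)
          = ∫ q in {q : ℝ × ℝ | 0 ≤ q.1 ∧ 0 ≤ q.2 ∧ q.1 + q.2 ≤ 1 - x},
              (fun y z => f x y z) q.1 q.2 from
        (integral_indicator (by
          exact (measurableSet_le measurable_const measurable_fst).inter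
            ((measurableSet_le measurable_const measurable_snd).inter
              (measurableSet_le (measurable_fst.add measurable_snd) measurable_const)))),
        T2_integral (fun y z => f x y z)
          (hf.comp (Continuous.prodMk continuous_const continuous_id))
          (1 - x) (by linarith [hx.2])]
      rw [Set.indicator_of_mem (Set.mem_Icc.2 hx)]
    · have h1 : ∀ q : ℝ × ℝ, T3set.indicator (fun p : ℝ × ℝ × ℝ => f p.1 p.2.1 p.2.2) (x, q) = 0 := by
        intro q
        refine Set.indicator_of_notMem (fun h => hx ?_) _
        obtain ⟨h1, h2, h3, h4⟩ := h
        exact Set.mem_Icc.2 ⟨h1, by linarith⟩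
      simp only [h1, integral_zero]
      rw [Set.indicator_of_notMem hx]
  rw [key, integral_indicator measurableSet_Icc, sliceIcc _ _ (by norm_num : (0:ℝ) ≤ 1)]

lemma T3_poly (a0 a1 a2 a3 : ℝ) :
    ∫ p in T3set, (a0 + a1 * p.1 + a2 * p.2.1 + a3 * p.2.2)^2 =
      (a0^2 + (a0+a1)^2 + (a0+a2)^2 + (a0+a3)^2
        + (a0 + (a0+a1) + (a0+a2) + (a0+a3))^2) / 120 := by
  have hf : Continuous fun p : ℝ × ℝ × ℝ =>
      (fun x y z => (a0 + a1 * x + a2 * y + a3 * z)^2) p.1 p.2.1 p.2.2 := by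
    apply Continuous.pow
    exact ((continuous_const.add (continuous_const.mul continuous_fst)).add
      (continuous_const.mul (continuous_fst.comp continuous_snd))).add
      (continuous_const.mul (continuous_snd.comp continuous_snd))
  have lvl1 : ∀ x y : ℝ, (∫ z in (0:ℝ)..(1 - x - y), (a0 + a1 * x + a2 * y + a3 * z)^2)
      = ((1/3:ℝ)*a3^2 + a0*a3 + a0^2 + -1*x*a3^2 + x*a1*a3 + -2*x*a0*a3 + 2*x*a0*a1 + -1*x*a0^2 + x^2*a3^2 + -2*x^2*a1*a3 + x^2*a1^2 + x^2*a0*a3 + -2*x^2*a0*a1 + (-1/3:ℝ)*x^3*a3^2 + x^3*a1*a3 + -1*x^3*a1^2) + (-1*a3^2 + a2*a3 + -2*a0*a3 + 2*a0*a2 + -1*a0^2 + 2*x*a3^2 + -2*x*a2*a3 + -2*x*a1*a3 + 2*x*a1*a2 + 2*x*a0*a3 + -2*x*a0*a2 + -2*x*a0*a1 + -1*x^2*a3^2 + x^2*a2*a3 + 2*x^2*a1*a3 + -2*x^2*a1*a2 + -1*x^2*a1^2)*y + (a3^2 + -2*a2*a3 + a2^2 + a0*a3 + -2*a0*a2 +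 -1*x*a3^2 + 2*x*a2*a3 + -1*x*a2^2 + x*a1*a3 + -2*x*a1*a2)*y^2 + ((-1/3:ℝ)*a3^2 + a2*a3 + -1*a2^2)*y^3 + (0:ℝ)*y^4 := by
    intro x y
    rw [show (fun z => (a0 + a1 * x + a2 * y + a3 * z)^2)
        = fun z => ((a0 + a1*x + a2*y)^2) + (2*(a0 + a1*x + a2*y)*a3)*z + (a3^2)*z^2
            + (0:ℝ)*z^3 + (0:ℝ)*z^4 from funext fun z => by ring, int_poly]
    ring
  have lvl2 : ∀ x : ℝ, (∫ y in (0:ℝ)..(1 - x), (((1/3:ℝ)*a3^2 + a0*a3 + a0^2 + -1*x*a3^2 + x*a1*a3 + -2*x*a0*a3 + 2*x*a0*a1 + -1*x*a0^2 + x^2*a3^2 + -2*x^2*a1*a3 + x^2*a1^2 + x^2*a0*a3 + -2*x^2*a0*a1 + (-1/3:ℝ)*x^3*a3^2 + x^3*a1*a3 + -1*x^3*a1^2) + (-1*a3^2 + a2*a3 + -2*a0*a3 + 2*a0*a2 + -1*a0^2 + 2*x*a3^2 + -2*x*a2*a3 + -2*x*a1*a3 + 2*x*a1*a2 + 2*x*a0*a3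 + -2*x*a0*a2 + -2*x*a0*a1 + -1*x^2*a3^2 + x^2*a2*a3 + 2*x^2*a1*a3 + -2*x^2*a1*a2 + -1*x^2*a1^2)*y + (a3^2 + -2*a2*a3 + a2^2 + a0*a3 + -2*a0*a2 + -1*x*a3^2 + 2*x*a2*a3 + -1*x*a2^2 + x*a1*a3 + -2*x*a1*a2)*y^2 + ((-1/3:ℝ)*a3^2 + a2*a3 + -1*a2^2)*y^3 + (0:ℝ)*y^4))
      = ((1/12:ℝ)*a3^2 + (1/12:ℝ)*a2*a3 + (1/12:ℝ)*a2^2 + (1/3:ℝ)*a0*a3 + (1/3:ℝ)*a0*a2 + (1/2:ℝ)*a0^2) + ((-1/3:ℝ)*a3^2 + (-1/3:ℝ)*a2*a3 + (-1/3:ℝ)*a2^2 + (1/3:ℝ)*a1*a3 + (1/3:ℝ)*a1*a2 + -1*a0*a3 + -1*a0*a2 + a0*a1 + -1*a0^2)*x + ((1/2:ℝ)*a3^2 + (1/2:ℝ)*a2*a3 + (1/2:ℝ)*a2^2 + -1*a1*a3 + -1*a1*a2 + (1/2:ℝ)*a1^2 + a0*a3 + a0*a2 + -2*a0*a1 + (1/2:ℝ)*a0^2)*x^2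 + ((-1/3:ℝ)*a3^2 + (-1/3:ℝ)*a2*a3 + (-1/3:ℝ)*a2^2 + a1*a3 + a1*a2 + -1*a1^2 + (-1/3:ℝ)*a0*a3 + (-1/3:ℝ)*a0*a2 + a0*a1)*x^3 + ((1/12:ℝ)*a3^2 + (1/12:ℝ)*a2*a3 + (1/12:ℝ)*a2^2 + (-1/3:ℝ)*a1*a3 + (-1/3:ℝ)*a1*a2 + (1/2:ℝ)*a1^2)*x^4 := by
    intro x
    rw [int_poly]
    ring
  rw [T3_integral (fun x y z => (a0 + a1 * x + a2 * y + a3 * z)^2) hf]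
  simp only [lvl1]
  simp only [lvl2]
  rw [int_poly]
  ring

noncomputable def Phi : EuclideanSpace ℝ (Fin 3) ≃ᵐ ℝ × ℝ × ℝ :=
  ((MeasurableEquiv.toLp 2 (Fin 3 → ℝ)).symm.trans
    (MeasurableEquiv.piFinSuccAbove (fun _ : Fin 3 => ℝ) 0)).trans
    ((MeasurableEquiv.refl ℝ).prodCongr MeasurableEquiv.finTwoArrow)

lemma Phi_apply (x : EuclideanSpace ℝ (Fin 3)) : Phi x = (x 0, x 1, x 2) := rfl

def Sset : Set (EuclideanSpace ℝ (Fin 3)) := Phi ⁻¹' T3set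

lemma Sset_mem (x : EuclideanSpace ℝ (Fin 3)) :
    x ∈ Sset ↔ 0 ≤ x 0 ∧ 0 ≤ x 1 ∧ 0 ≤ x 2 ∧ x 0 + x 1 + x 2 ≤ 1 := by
  rw [Sset, Set.mem_preimage, Phi_apply]; exact Iff.rfl

noncomputable def pvert : Fin 4 → EuclideanSpace ℝ (Fin 3) :=
  Fin.cases 0 (fun i => EuclideanSpace.single i 1)

lemma rep (x : EuclideanSpace ℝ (Fin 3)) :
    x = ∑ i : Fin 3, x i • EuclideanSpace.single i (1:ℝ) := by
  have h := (EuclideanSpace.basisFun (Fin 3) ℝ).toBasis.sum_repr x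
  simp only [OrthonormalBasis.coe_toBasis_repr_apply, EuclideanSpace.basisFun_repr,
    OrthonormalBasis.coe_toBasis, EuclideanSpace.basisFun_apply] at h
  exact h.symm

lemma Sset_convex : Convex ℝ Sset := by
  intro x hx y hy a b ha hb hab
  rw [Sset_mem] at hx hy ⊢
  obtain ⟨hx0, hx1, hx2, hx3⟩ := hx
  obtain ⟨hy0, hy1, hy2, hy3⟩ := hy
  simp only [PiLp.add_apply, PiLp.smul_apply, smul_eq_mul]
  have k1 : a * (x 0 + x 1 + x 2) ≤ a * 1 := mul_le_mul_of_nonneg_left (by linarith) ha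
  have k2 : b * (y 0 + y 1 + y 2) ≤ b * 1 := mul_le_mul_of_nonneg_left (by linarith) hb
  refine ⟨by positivity, by positivity, by positivity, by nlinarith⟩

lemma Sset_hull : Sset = convexHull ℝ (Set.range pvert) := by
  apply Set.Subset.antisymm
  · intro x hx
    rw [Sset_mem] at hx
    obtain ⟨h0, h1, h2, h3⟩ := hx
    set w : Fin 4 → ℝ := ![1 - (x 0 + x 1 + x 2), x 0, x 1, x 2] with hw
    have hw1 : ∑ j, w j = 1 := by
      rw [Fin.sum_univ_four]; simp [hw]; ring
    have hw0 : ∀ j ∈ Finset.univ, 0 ≤ w j := by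
      intro j _; fin_cases j <;> simp [hw] <;> linarith
    have hmem := affineCombination_mem_convexHull (v := pvert) hw0 hw1
    rwa [Finset.univ.affineCombination_eq_linear_combination pvert w hw1,
      show ∑ j, w j • pvert j = x from ?_] at hmem
    rw [Fin.sum_univ_four]
    have e0 : pvert 0 = 0 := rfl
    have e1 : pvert 1 = EuclideanSpace.single 0 1 := rfl
    have e2 : pvert 2 = EuclideanSpace.single 1 1 := rfl
    have e3 : pvert 3 = EuclideanSpace.single 2 1 := rfl
    rw [e0, e1, e2, e3, smul_zero, zero_add]
    have := (rep x).symm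
    rw [Fin.sum_univ_three] at this
    rw [show w 1 = x 0 from rfl, show w 2 = x 1 from rfl, show w 3 = x 2 from rfl, this]
  · refine convexHull_min ?_ Sset_convex
    rintro _ ⟨j, rfl⟩
    induction j using Fin.cases with
    | zero =>
      rw [Sset_mem]
      norm_num [pvert]
    | succ i =>
      rw [Sset_mem]
      have : ∀ k : Fin 3, pvert i.succ k = if k = i then (1:ℝ) else 0 := fun k => by
        rw [pvert, Fin.cases_succ, EuclideanSpace.single_apply]
      rw [this, this, this]
      fin_cases i <;> norm_num [Fin.ext_iff]
noncomputable def Lmap (b : AffineBasis (Fin 4) ℝ (EuclideanSpace ℝ (Fin 3))) :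
    EuclideanSpace ℝ (Fin 3) ≃ₗ[ℝ] EuclideanSpace ℝ (Fin 3) :=
  (EuclideanSpace.basisFun (Fin 3) ℝ).toBasis.equiv (b.basisOf 0) (finSuccAboveEquiv 0)

lemma Lmap_basis (b : AffineBasis (Fin 4) ℝ (EuclideanSpace ℝ (Fin 3))) (i : Fin 3) :
    Lmap b (EuclideanSpace.single i (1:ℝ)) = b i.succ - b 0 := by
  rw [← EuclideanSpace.basisFun_apply, ← OrthonormalBasis.coe_toBasis, Lmap, Module.Basis.equiv_apply,
    AffineBasis.basisOf_apply, finSuccAboveEquiv_apply, vsub_eq_sub]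
  norm_num [Fin.succAbove_zero]

noncomputable def Faff (b : AffineBasis (Fin 4) ℝ (EuclideanSpace ℝ (Fin 3))) :
    EuclideanSpace ℝ (Fin 3) →ᵃ[ℝ] EuclideanSpace ℝ (Fin 3) :=
  (Lmap b).toLinearMap.toAffineMap + AffineMap.const ℝ (EuclideanSpace ℝ (Fin 3)) (b 0)

lemma Faff_apply (b : AffineBasis (Fin 4) ℝ (EuclideanSpace ℝ (Fin 3)))
    (x : EuclideanSpace ℝ (Fin 3)) : Faff b x = Lmap b x + b 0 := rfl

lemma Faff_image (b : AffineBasis (Fin 4) ℝ (EuclideanSpace ℝ (Fin 3))) :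
    ⇑(Faff b) '' Sset = convexHull ℝ (Set.range ⇑b) := by
  have hcomp : ⇑(Faff b) ∘ pvert = ⇑b := by
    funext j
    induction j using Fin.cases with
    | zero =>
      show Faff b (pvert 0) = b 0
      rw [show pvert 0 = 0 from rfl, Faff_apply, map_zero, zero_add]
    | succ i =>
      show Faff b (pvert i.succ) = b i.succ
      rw [show pvert i.succ = EuclideanSpace.single i 1 from rfl, Faff_apply, Lmap_basis,
        sub_add_cancel]
  rw [Sset_hull, AffineMap.image_convexHull, ← Set.range_comp, hcomp]

lemma Phi_mp : MeasureTheory.MeasurePreserving Phi volume volume := by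
  have h1 := EuclideanSpace.volume_preserving_symm_measurableEquiv_toLp (Fin 3)
  have h2 := volume_preserving_piFinSuccAbove (fun _ : Fin 3 => ℝ) 0
  have h3 : MeasurePreserving (⇑((MeasurableEquiv.refl ℝ).prodCongr MeasurableEquiv.finTwoArrow))
      volume volume :=
    (MeasurePreserving.id (volume : Measure ℝ)).prod (volume_preserving_finTwoArrow ℝ)
  exact (h3.comp h2).comp h1

/-- For an affine function `v` on a nondegenerate tetrahedron `K`,
the lumped (vertex-quadrature) norm is bounded by `√5` times the L² norm:
`(vol(K)/4) Σᵢ v(Sᵢ)² ≤ 5 ∫_K v² dx`. -/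
theorem tetrahedron_lumped_le_five_sq_integral
    (b : AffineBasis (Fin 4) ℝ (EuclideanSpace ℝ (Fin 3)))
    (K : Set (EuclideanSpace ℝ (Fin 3))) (hK : K = convexHull ℝ (Set.range ⇑b))
    (v : EuclideanSpace ℝ (Fin 3) →ᵃ[ℝ] ℝ) :
    (volume K).toReal / 4 * ∑ i, (v (b i)) ^ 2 ≤ 5 * ∫ x in K, (v x) ^ 2 := by
  set c : Fin 4 → ℝ := fun i => v (b i) with hc
  set L' : EuclideanSpace ℝ (Fin 3) →L[ℝ] EuclideanSpace ℝ (Fin 3) :=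
    LinearMap.toContinuousLinearMap (Lmap b).toLinearMap with hL'
  have hL'app : ∀ x, L' x = Lmap b x := fun x => rfl
  have hder : ∀ x ∈ Sset, HasFDerivWithinAt (⇑(Faff b)) L' Sset x := by
    intro x hx
    have hfa : ⇑(Faff b) = fun y => L' y + b 0 := funext fun y => by
      rw [Faff_apply, hL'app]
    rw [hfa]
    exact ((L'.hasFDerivAt).add_const (b 0)).hasFDerivWithinAt
  have hSm : MeasurableSet Sset := Phi.measurable T3m
  have hinj : Set.InjOn (⇑(Faff b)) Sset := by
    intro x _ y _ h
    rw [Faff_apply, Faff_apply] at h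
    exact (Lmap b).injective (add_right_cancel h)
  have key : ∀ g : EuclideanSpace ℝ (Fin 3) → ℝ,
      (∫ x in (⇑(Faff b)) '' Sset, g x) = |L'.det| * ∫ x in Sset, g (Faff b x) := by
    intro g
    rw [integral_image_eq_integral_abs_det_fderiv_smul volume hSm hder hinj g]
    simp only [smul_eq_mul]
    rw [MeasureTheory.integral_const_mul]
  have hKimg : K = (⇑(Faff b)) '' Sset := by rw [hK, Faff_image]
  have htrans : ∀ g : ℝ × ℝ × ℝ → ℝ, (∫ x in Sset, g (Phi x)) = ∫ p in T3set, g p :=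
    fun g => Phi_mp.setIntegral_preimage_emb Phi.measurableEmbedding g T3set
  have hvol : (volume K).toReal = |L'.det| * (1/6 : ℝ) := by
    have h1 : (∫ x in K, (1:ℝ)) = (volume K).toReal := by
      rw [setIntegral_const, smul_eq_mul, mul_one, measureReal_def]
    rw [← h1, hKimg, key fun _ => (1:ℝ)]
    congr 1
    rw [htrans (fun _ => (1:ℝ))]
    have h2 : (fun _ : ℝ × ℝ × ℝ => (1:ℝ))
        = fun p : ℝ × ℝ × ℝ => ((1:ℝ) + 0 * p.1 + 0 * p.2.1 + 0 * p.2.2)^2 :=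
      funext fun p => by norm_num
    rw [h2, T3_poly]
    norm_num
  have hvf : ∀ x : EuclideanSpace ℝ (Fin 3),
      v (Faff b x) = c 0 + (c 1 - c 0) * x 0 + (c 2 - c 0) * x 1 + (c 3 - c 0) * x 2 := by
    intro x
    rw [Faff_apply]
    have h1 : Lmap b x + b 0 = (Lmap b x) +ᵥ (b 0) := rfl
    rw [h1, AffineMap.map_vadd]
    have h2 : v.linear (Lmap b x) = ∑ i : Fin 3, x i * (c i.succ - c 0) := by
      have hrep : Lmap b x = ∑ i : Fin 3, x i • (b i.succ - b 0) := by
        conv_lhs => rw [rep x]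
        rw [map_sum]
        exact Finset.sum_congr rfl fun i _ => by rw [_root_.map_smul, Lmap_basis]
      rw [hrep, map_sum]
      refine Finset.sum_congr rfl fun i _ => ?_
      rw [_root_.map_smul, ← vsub_eq_sub (b i.succ), AffineMap.linearMap_vsub, smul_eq_mul]
      rfl
    rw [h2, Fin.sum_univ_three, vadd_eq_add,
      show c (Fin.succ (0:Fin 3)) = c 1 from rfl, show c (Fin.succ (1:Fin 3)) = c 2 from rfl,
      show c (Fin.succ (2:Fin 3)) = c 3 from rfl, show v (b 0) = c 0 from rfl]
    ring
  have hint : (∫ x in K, (v x)^2) = |L'.det| *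
      ((c 0^2 + (c 0 + (c 1 - c 0))^2 + (c 0 + (c 2 - c 0))^2 + (c 0 + (c 3 - c 0))^2
        + (c 0 + (c 0 + (c 1 - c 0)) + (c 0 + (c 2 - c 0)) + (c 0 + (c 3 - c 0)))^2) / 120) := by
    rw [hKimg, key (fun x => (v x)^2)]
    congr 1
    have h1 : (fun x : EuclideanSpace ℝ (Fin 3) => (v (Faff b x))^2)
        = fun x => (fun p : ℝ × ℝ × ℝ =>
            (c 0 + (c 1 - c 0) * p.1 + (c 2 - c 0) * p.2.1 + (c 3 - c 0) * p.2.2)^2) (Phi x) := by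
      funext x
      rw [hvf x, Phi_apply]
    rw [h1, htrans (fun p : ℝ × ℝ × ℝ =>
      (c 0 + (c 1 - c 0) * p.1 + (c 2 - c 0) * p.2.1 + (c 3 - c 0) * p.2.2)^2), T3_poly]
  have hsum : (∑ i, (v (b i))^2) = c 0^2 + c 1^2 + c 2^2 + c 3^2 := by
    rw [Fin.sum_univ_four]
  rw [hsum, hvol, hint]
  nlinarith [mul_nonneg (abs_nonneg L'.det) (sq_nonneg (c 0 + c 1 + c 2 + c 3))]
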